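/- SCC characterization for initialized formulas: let L be an LTS, ψ ∈ L⁺(F_p^∞) a conjunction-free formula in canonical form, and k ≥ |S| + 1. Then there exists a run ρ of L with (ρ,k) ⊭ F ψ if and only if there exist a strongly connected component C of L and a ψ-avoiding sequence U that is realized by a run all of whose states lie in C. -/

import Mathlib

open scoped Classical
open MeasureTheory

/-- A labelled transition system: a finite set of states `S`, an initial state,
a transition relation in which every state has at least one successor, and a
labeling of states by sets of atomic propositions. -/
structure LTS (S AP : Type) where
  init : S
  T : S → S → Prop
  lbl : S → Set AP
  succ_nonempty : ∀ s : S, ∃ t : S, T s t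

variable {S AP : Type}

/-- A run of an LTS: an infinite sequence of states following the transitions. -/
def IsRun (L : LTS S AP) (ρ : ℕ → S) : Prop := ∀ i : ℕ, L.T (ρ i) (ρ (i + 1))

/-- The shifted run `ρ[i..]`. -/
def shift (ρ : ℕ → S) (i : ℕ) : ℕ → S := fun n => ρ (n + i)

/-- A state formula: a (possibly empty, i.e. `false`) disjunction of literals,
each literal being a polarity (`true` = positive) paired with an atomic proposition. -/
abbrev StateFormula (AP : Type) := List (Bool × AP)

/-- A state `s` satisfies a state formula `θ`. -/
def SatState (L : LTS S AP) (θ : StateFormula AP) (s : S) : Prop :=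
  ∃ p ∈ θ, if p.1 then p.2 ∈ L.lbl s else p.2 ∉ L.lbl s

/-- A conjunction-free formula in canonical form `ψ = θ ∨ ⋁ F_p^∞ ψᵢ`, identified
with its tree `T(ψ)`: a root labeled by the state formula `θ` whose children are
the trees of the `ψᵢ`. -/
inductive CTree (AP : Type) : Type where
  | node : StateFormula AP → List (CTree AP) → CTree AP

/-- Satisfaction `(ρ, k) ⊨ ψ` for a canonical conjunction-free formula
`ψ = θ ∨ ⋁ F_p^∞ ψᵢ`. -/
def SatC (L : LTS S AP) : CTree AP → (ℕ → S) → ℕ → Prop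
  | .node θ cs, ρ, k =>
      SatState L θ (ρ 0) ∨
      ∃ c ∈ cs.attach, ∀ i : ℕ, ∃ j ≤ k, SatC L c.1 (shift ρ (i + j)) k
termination_by t => sizeOf t
decreasing_by
  have := List.sizeOf_lt_of_mem c.2
  simp only [CTree.node.sizeOf_spec]
  omega

/-- Satisfaction `(ρ, k) ⊨ F_p^∞ ψ` for a canonical conjunction-free formula `ψ`. -/
def SatFinfC (L : LTS S AP) (t : CTree AP) (ρ : ℕ → S) (k : ℕ) : Prop :=
  ∀ i : ℕ, ∃ j ≤ k, SatC L t (shift ρ (i + j)) k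

/-- `Interleave l₁ l₂ l`: `l` is an interleaving (shuffle) of `l₁` and `l₂`. -/
inductive Interleave {α : Type} : List α → List α → List α → Prop where
  | nil : Interleave [] [] []
  | left {a : α} {l₁ l₂ l : List α} : Interleave l₁ l₂ l → Interleave (a :: l₁) l₂ (a :: l)
  | right {a : α} {l₁ l₂ l : List α} : Interleave l₁ l₂ l → Interleave l₁ (a :: l₂) (a :: l)

mutual
/-- `LinExt t l`: the list `l` of state-formula labels enumerates the nodes of the
tree `t` in a linear order extending the ancestor order of the tree (the root comes
first, followed by an interleaving of linear extensions of the children's subtrees). -/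
inductive LinExt {AP : Type} : CTree AP → List (StateFormula AP) → Prop where
  | node {θ : StateFormula AP} {cs : List (CTree AP)} {l : List (StateFormula AP)} :
      LinExtF cs l → LinExt (.node θ cs) (θ :: l)

/-- Linear extensions of a forest: interleavings of linear extensions of its trees. -/
inductive LinExtF {AP : Type} : List (CTree AP) → List (StateFormula AP) → Prop where
  | nil : LinExtF [] []
  | cons {t : CTree AP} {ts : List (CTree AP)} {l₁ l₂ l : List (StateFormula AP)} :
      LinExt t l₁ → LinExtF ts l₂ → Interleave l₁ l₂ l → LinExtF (t :: ts) l
end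

/-- A (nonempty) finite path of the LTS. -/
def IsPath (L : LTS S AP) (u : List S) : Prop := u ≠ [] ∧ u.Chain' L.T

/-- A loop: a finite path with at least one transition whose first and last states coincide. -/
def IsLoop (L : LTS S AP) (u : List S) : Prop :=
  2 ≤ u.length ∧ u.Chain' L.T ∧ u.head? = u.getLast?

/-- The set `occ u` of states occurring in a finite sequence. -/
def occ (u : List S) : Set S := {s | s ∈ u}

/-- A `ψ`-avoiding sequence: a linear ordering of the nodes of `T(ψ)` extending the
ancestor order together with, for each node labeled by a state formula `θ`, a loop
whose set of states is a `θ`-avoiding cycle. -/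
structure AvoidingSeq (L : LTS S AP) (ψ : CTree AP) where
  labels : List (StateFormula AP)
  loops : List (List S)
  linext : LinExt ψ labels
  length_eq : loops.length = labels.length
  isLoop : ∀ u ∈ loops, IsLoop L u
  avoid : ∀ p ∈ loops.zip labels, ∀ s ∈ p.1, ¬ SatState L p.2 s

/-- A run `ρ` realizes an avoiding sequence `U = u₀, …, u_l`: there are positions
`j₀ ≤ j₁ ≤ … ≤ j_l` with `ρ (jᵢ) ∈ occ uᵢ` for every `i`. -/
def RealizedBy {L : LTS S AP} {ψ : CTree AP} (U : AvoidingSeq L ψ) (ρ : ℕ → S) : Prop :=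
  ∃ j : ℕ → ℕ, Monotone j ∧ ∀ i : Fin U.loops.length, ρ (j i) ∈ occ (U.loops.get i)

/-- Reachability along transitions. -/
def Reachable (L : LTS S AP) : S → S → Prop := Relation.ReflTransGen L.T

/-- A strongly connected component: an equivalence class of mutual reachability. -/
def IsSCC (L : LTS S AP) (C : Set S) : Prop :=
  ∃ s : S, C = {t : S | Reachable L s t ∧ Reachable L t s}

/-- A bottom strongly connected component: an SCC closed under transitions. -/
def IsBSCC (L : LTS S AP) (C : Set S) : Prop :=
  IsSCC L C ∧ ∀ s ∈ C, ∀ t : S, L.T s t → t ∈ C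
section Basics
variable {S AP : Type}

theorem shift_shift (ρ : ℕ → S) (a b : ℕ) : shift (shift ρ a) b = shift ρ (b + a) := by
  funext n; simp [shift, Nat.add_assoc]

theorem satState_nil (L : LTS S AP) (s : S) : ¬ SatState L [] s := by
  simp [SatState]

theorem satC_node {L : LTS S AP} {θ : StateFormula AP} {cs : List (CTree AP)}
    {ρ : ℕ → S} {k : ℕ} :
    SatC L (.node θ cs) ρ k ↔
      SatState L θ (ρ 0) ∨ ∃ c ∈ cs, ∀ i : ℕ, ∃ j ≤ k, SatC L c (shift ρ (i + j)) k := by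
  rw [SatC]
  apply or_congr Iff.rfl
  constructor
  · rintro ⟨⟨c, hc⟩, -, h⟩; exact ⟨c, hc, h⟩
  · rintro ⟨c, hc, h⟩; exact ⟨⟨c, hc⟩, List.mem_attach _ _, h⟩

def nodeLabels : CTree AP → List (StateFormula AP)
  | .node θ cs => θ :: cs.attach.flatMap (fun c => nodeLabels c.1)
termination_by t => sizeOf t
decreasing_by
  have := List.sizeOf_lt_of_mem c.2
  simp only [CTree.node.sizeOf_spec]
  omega

theorem interleave_mem {α : Type} {l₁ l₂ l : List α} (h : Interleave l₁ l₂ l) :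
    ∀ x, x ∈ l ↔ (x ∈ l₁ ∨ x ∈ l₂) := by
  induction h with
  | nil => simp
  | left _ ih => intro x; simp [ih x]; tauto
  | right _ ih => intro x; simp [ih x]; tauto

mutual
theorem linExt_labels_subset {t : CTree AP} {l : List (StateFormula AP)}
    (h : LinExt t l) : ∀ θ ∈ nodeLabels t, θ ∈ l := by
  cases t with
  | node θ₀ cs =>
    cases h with
    | @node _ _ l' hF =>
      intro θ hθ
      rw [nodeLabels] at hθ
      simp only [List.mem_cons, List.mem_flatMap, List.mem_attach, true_and] at hθ
      rcases hθ with rfl | ⟨⟨c, hc⟩, hmem⟩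
      · exact List.mem_cons_self
      · exact List.mem_cons_of_mem _ (linExtF_labels_subset hF c hc θ hmem)
termination_by sizeOf t
decreasing_by
  all_goals (subst_vars; simp only [CTree.node.sizeOf_spec, List.cons.sizeOf_spec]; omega)

theorem linExtF_labels_subset {ts : List (CTree AP)} {l : List (StateFormula AP)}
    (h : LinExtF ts l) : ∀ t ∈ ts, ∀ θ ∈ nodeLabels t, θ ∈ l := by
  cases h with
  | nil => intro t ht; cases ht
  | @cons t ts l₁ l₂ _ h1 h2 hI =>
    intro t' ht' θ hθ
    rcases List.mem_cons.1 ht' with rfl | ht'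
    · exact (interleave_mem hI θ).2 (Or.inl (linExt_labels_subset h1 θ hθ))
    · exact (interleave_mem hI θ).2 (Or.inr (linExtF_labels_subset h2 t' ht' θ hθ))
termination_by sizeOf ts
decreasing_by
  all_goals (subst_vars; simp only [CTree.node.sizeOf_spec, List.cons.sizeOf_spec]; omega)
end

end Basics
section Merge
variable {α : Type}

theorem interleave_nil_left (l : List α) : Interleave [] l l := by
  induction l with
  | nil => exact .nil
  | cons a l ih => exact .right ih

theorem interleave_nil_right (l : List α) : Interleave l [] l := by
  induction l with
  | nil => exact .nil
  | cons a l ih => exact .left ih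

theorem interleave_map {β : Type} (f : α → β) {l₁ l₂ l : List α} (h : Interleave l₁ l₂ l) :
    Interleave (l₁.map f) (l₂.map f) (l.map f) := by
  induction h with
  | nil => exact .nil
  | left _ ih => exact .left ih
  | right _ ih => exact .right ih

def kmerge (key : α → ℕ) : List α → List α → List α
  | [], l => l
  | l, [] => l
  | a :: l₁, b :: l₂ =>
      if key a ≤ key b then a :: kmerge key l₁ (b :: l₂) else b :: kmerge key (a :: l₁) l₂
termination_by l₁ l₂ => l₁.length + l₂.length

theorem kmerge_nil_left (key : α → ℕ) (l : List α) : kmerge key [] l = l := by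
  cases l <;> rw [kmerge]

theorem kmerge_nil_right (key : α → ℕ) (l : List α) : kmerge key l [] = l := by
  cases l with
  | nil => rw [kmerge]
  | cons a t => rw [kmerge]; simp

theorem kmerge_cons_cons (key : α → ℕ) (a b : α) (l₁ l₂ : List α) :
    kmerge key (a :: l₁) (b :: l₂) =
      if key a ≤ key b then a :: kmerge key l₁ (b :: l₂) else b :: kmerge key (a :: l₁) l₂ := by
  rw [kmerge]

theorem kmerge_interleave (key : α → ℕ) (l₁ l₂ : List α) :
    Interleave l₁ l₂ (kmerge key l₁ l₂) := by
  induction l₁, l₂ using kmerge.induct key with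
  | case1 l => rw [kmerge_nil_left]; exact interleave_nil_left _
  | case2 l _ => rw [kmerge_nil_right]; exact interleave_nil_right _
  | case3 a l₁ b l₂ hab ih => rw [kmerge_cons_cons, if_pos hab]; exact .left ih
  | case4 a l₁ b l₂ hab ih => rw [kmerge_cons_cons, if_neg hab]; exact .right ih

theorem interleave_mem' {l₁ l₂ l : List α} (h : Interleave l₁ l₂ l) {x : α} (hx : x ∈ l) :
    x ∈ l₁ ∨ x ∈ l₂ := (interleave_mem h x).1 hx

theorem kmerge_sorted (key : α → ℕ) (l₁ l₂ : List α)
    (h₁ : l₁.Pairwise (fun a b => key a ≤ key b)) (h₂ : l₂.Pairwise (fun a b => key a ≤ key b)) :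
    (kmerge key l₁ l₂).Pairwise (fun a b => key a ≤ key b) := by
  induction l₁, l₂ using kmerge.induct key with
  | case1 l => rw [kmerge_nil_left]; exact h₂
  | case2 l _ => rw [kmerge_nil_right]; exact h₁
  | case3 a l₁ b l₂ hab ih =>
    rw [kmerge_cons_cons, if_pos hab]
    rw [List.pairwise_cons] at h₁ ⊢
    refine ⟨?_, ih h₁.2 h₂⟩
    intro x hx
    rcases interleave_mem' (kmerge_interleave key l₁ (b :: l₂)) hx with hx | hx
    · exact h₁.1 x hx
    · rcases List.mem_cons.1 hx with rfl | hx
      · exact hab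
      · exact le_trans hab ((List.pairwise_cons.1 h₂).1 x hx)
  | case4 a l₁ b l₂ hab ih =>
    rw [kmerge_cons_cons, if_neg hab]
    rw [List.pairwise_cons] at h₂ ⊢
    refine ⟨?_, ih h₁ h₂.2⟩
    intro x hx
    rcases interleave_mem' (kmerge_interleave key (a :: l₁) l₂) hx with hx | hx
    · rcases List.mem_cons.1 hx with rfl | hx
      · omega
      · exact le_trans (by omega) ((List.pairwise_cons.1 h₁).1 x hx)
    · exact h₂.1 x hx

theorem kmerge_mem (key : α → ℕ) {l₁ l₂ : List α} {x : α} (hx : x ∈ kmerge key l₁ l₂) :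
    x ∈ l₁ ∨ x ∈ l₂ := interleave_mem' (kmerge_interleave key l₁ l₂) hx

end Merge
section Paths
variable {S AP : Type} {L : LTS S AP}

theorem run_reach {ρ : ℕ → S} (hρ : IsRun L ρ) {a b : ℕ} (hab : a ≤ b) :
    Reachable L (ρ a) (ρ b) := by
  induction b, hab using Nat.le_induction with
  | base => exact Relation.ReflTransGen.refl
  | succ n hn ih => exact ih.tail (hρ n)

theorem chain'_reach {l : List S} (h : l.Chain' L.T) {i j : ℕ} (hij : i ≤ j)
    (hj : j < l.length) :
    Relation.ReflTransGen L.T (l[i]'(lt_of_le_of_lt hij hj)) (l[j]'hj) := by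
  induction j with
  | zero =>
    have : i = 0 := Nat.le_zero.1 hij
    subst this; exact Relation.ReflTransGen.refl
  | succ n ih =>
    rcases Nat.eq_or_lt_of_le hij with rfl | hlt
    · exact Relation.ReflTransGen.refl
    · have hn : n < l.length - 1 := by omega
      have step := List.isChain_iff_getElem.1 h n (by omega)
      exact (ih (by omega) (by omega)).tail step

theorem loop_head_eq_getLast {u : List S} (hu : IsLoop L u) :
    ∀ (h0 : 0 < u.length) (h1 : u.length - 1 < u.length), u[0] = u[u.length - 1] := by
  intro h0 h1
  obtain ⟨hlen, hchain, hhl⟩ := hu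
  have h2 := List.getLast?_eq_getElem? (l := u)
  have h3 : u.head? = u[0]? := by
    cases u with
    | nil => simp at hlen
    | cons a t => simp
  rw [h3, h2] at hhl
  rw [List.getElem?_eq_getElem h0, List.getElem?_eq_getElem h1] at hhl
  exact Option.some_injective _ hhl

theorem loop_mutual_reach {u : List S} (hu : IsLoop L u) {x y : S}
    (hx : x ∈ u) (hy : y ∈ u) : Reachable L x y := by
  obtain ⟨i, hi, rfl⟩ := List.mem_iff_getElem.1 hx
  obtain ⟨j, hj, rfl⟩ := List.mem_iff_getElem.1 hy
  rcases le_or_gt i j with hij | hij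
  · exact chain'_reach hu.2.1 hij hj
  · have h1 : Relation.ReflTransGen L.T (u[i]'hi) (u[u.length-1]'(by omega)) :=
      chain'_reach hu.2.1 (by omega) (by omega)
    have h2 : Relation.ReflTransGen L.T (u[0]'(by omega)) (u[j]'hj) :=
      chain'_reach hu.2.1 (by omega) hj
    have := loop_head_eq_getLast hu (by omega) (by omega)
    exact h1.trans (this ▸ h2)

theorem reach_path {a b : S} (h : Reachable L a b) :
    ∃ p : List S, p ≠ [] ∧ p.Chain' L.T ∧ p.head? = some a ∧ p.getLast? = some b := by
  induction h with
  | refl => exact ⟨[a], by simp, List.isChain_singleton _, rfl, rfl⟩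
  | @tail b c hab hbc ih =>
    obtain ⟨p, hne, hc, hh, hl⟩ := ih
    refine ⟨p ++ [c], by simp, ?_, ?_, ?_⟩
    · simp only [List.Chain', List.isChain_append]
      refine ⟨hc, List.isChain_singleton _, ?_⟩
      intro x hx y hy
      simp only [List.head?_cons, Option.mem_def, Option.some.injEq] at hy
      subst hy
      rw [hl] at hx
      simp only [Option.mem_def, Option.some.injEq] at hx
      subst hx
      exact hbc
    · rw [List.head?_append_of_ne_nil _ hne]; exact hh
    · rw [List.getLast?_append_of_ne_nil _ (by simp)]; rfl

/-- Glue two paths sharing an endpoint. -/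
def glue (p q : List S) : List S := p ++ q.tail

theorem glue_chain' {p q : List S} (hp : p.Chain' L.T) (hq : q.Chain' L.T)
    (hpq : p.getLast? = q.head?) : (glue p q).Chain' L.T := by
  simp only [glue, List.Chain', List.isChain_append]
  refine ⟨hp, hq.tail, ?_⟩
  intro x hx y hy
  cases q with
  | nil => simp at hy
  | cons qh qt =>
    simp at hpq
    rw [hpq] at hx; simp at hx; subst hx
    cases qt with
    | nil => simp at hy
    | cons y' t =>
      simp at hy; subst hy
      exact (List.isChain_cons_cons.1 hq).1

theorem glue_head? {p : List S} (q : List S) (hp : p ≠ []) : (glue p q).head? = p.head? :=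
  List.head?_append_of_ne_nil _ hp

theorem glue_getLast? {p q : List S} (hpq : p.getLast? = q.head?) (hq : q ≠ []) :
    (glue p q).getLast? = q.getLast? := by
  cases q with
  | nil => simp at hq
  | cons qh qt =>
    cases qt with
    | nil => simp [glue]; simp at hpq; simp [hpq]
    | cons y t =>
      rw [glue]
      rw [List.getLast?_append_of_ne_nil _ (by simp : (qh :: y :: t).tail ≠ [])]
      simp

theorem glue_occ {p q : List S} : occ (glue p q) ⊆ occ p ∪ occ q := by
  intro x hx
  rcases List.mem_append.1 hx with h | h
  · exact Or.inl h
  · exact Or.inr (List.mem_of_mem_tail h)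

theorem glue_length (p q : List S) : (glue p q).length = p.length + q.tail.length := by
  simp [glue]

theorem glue_prefix (p q : List S) : p <+: glue p q := ⟨q.tail, rfl⟩

theorem glue_suffix {p q : List S} (hpq : p.getLast? = q.head?) : q <:+ glue p q := by
  cases q with
  | nil => exact List.nil_suffix
  | cons qh qt =>
    have hp : p ≠ [] := by
      intro h; subst h; simp at hpq
    have hlast : p.getLast hp = qh := by
      have := List.getLast?_eq_getLast hp
      rw [this] at hpq; simp at hpq; exact hpq
    refine ⟨p.dropLast, ?_⟩
    have hd : p.dropLast ++ [qh] = p := by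
      rw [← hlast]; exact List.dropLast_append_getLast hp
    calc p.dropLast ++ qh :: qt = (p.dropLast ++ [qh]) ++ qt := by simp
    _ = p ++ qt := by rw [hd]
    _ = glue p (qh :: qt) := rfl

end Paths
section Backward
variable {S AP : Type} {L : LTS S AP}

theorem loop_pow {u : List S} (hu : IsLoop L u) (m : ℕ) :
    ∃ w : List S, w.Chain' L.T ∧ w.head? = u.head? ∧ w.getLast? = u.getLast? ∧
      occ w ⊆ occ u ∧ m ≤ w.length := by
  have hune : u ≠ [] := by
    intro h; subst h; simp [IsLoop] at hu
  induction m with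
  | zero => exact ⟨u, hu.2.1, rfl, rfl, subset_rfl, Nat.zero_le _⟩
  | succ n ih =>
    obtain ⟨w, hc, hh, hl, ho, hlen⟩ := ih
    have hwne : w ≠ [] := by
      intro h; subst h
      rw [List.head?_eq_head hune] at hh
      simp at hh
    have hcond : u.getLast? = w.head? := by rw [hh]; exact hu.2.2.symm
    refine ⟨glue u w, glue_chain' hu.2.1 hc hcond, ?_, ?_, ?_, ?_⟩
    · rw [glue_head? _ hune]
    · rw [glue_getLast? hcond hwne, hl]
    · exact fun x hx => by
        rcases glue_occ hx with h | h
        · exact h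
        · exact ho h
    · have h1 := glue_length u w
      have h2 : w.tail.length = w.length - 1 := List.length_tail
      have := hu.1
      omega

theorem build_W {C : Set S} (hC : ∀ a ∈ C, ∀ b ∈ C, Reachable L a b) (m : ℕ) :
    ∀ us : List (List S), (∀ u ∈ us, IsLoop L u ∧ occ u ⊆ C) → ∀ a ∈ C,
    ∃ W : List S, W.Chain' L.T ∧ W.head? = some a ∧ (∃ b ∈ C, W.getLast? = some b) ∧
      ∀ u ∈ us, ∃ v, v <:+: W ∧ occ v ⊆ occ u ∧ m ≤ v.length := by
  intro us
  induction us with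
  | nil =>
    intro _ a ha
    exact ⟨[a], List.isChain_singleton _, rfl, ⟨a, ha, rfl⟩, fun u hu => absurd hu (by simp)⟩
  | cons u us ih =>
    intro hus a ha
    obtain ⟨hu, huC⟩ := hus u (List.mem_cons_self)
    obtain ⟨w, hwc, hwh, hwl, hwo, hwlen⟩ := loop_pow hu m
    cases u with
    | nil => simp [IsLoop] at hu
    | cons uh ut =>
    have huh : uh ∈ C := huC (List.mem_cons_self)
    have hulast : (uh :: ut).getLast? = some uh := by
      have h := hu.2.2; simp only [List.head?_cons] at h; exact h.symm
    obtain ⟨p₁, hp₁ne, hp₁c, hp₁h, hp₁l⟩ := reach_path (hC a ha uh huh)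
    obtain ⟨W₁, hW₁c, hW₁h, ⟨b, hb, hW₁l⟩, hblocks⟩ :=
      ih (fun u' hu' => hus u' (List.mem_cons_of_mem _ hu')) uh huh
    have hwne : w ≠ [] := by
      intro h; subst h; simp at hwh
    have hW₁ne : W₁ ≠ [] := by
      intro h; subst h; simp at hW₁h
    have hcond1 : w.getLast? = W₁.head? := by rw [hwl, hulast, hW₁h]
    set inner := glue w W₁ with hinner
    have hinnerc : inner.Chain' L.T := glue_chain' hwc hW₁c hcond1
    have hinnerh : inner.head? = some uh := by rw [hinner, glue_head? _ hwne, hwh]; simp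
    have hinnerl : inner.getLast? = some b := by rw [hinner, glue_getLast? hcond1 hW₁ne, hW₁l]
    have hinnerne : inner ≠ [] := by intro h; rw [h] at hinnerh; simp at hinnerh
    have hcond2 : p₁.getLast? = inner.head? := by rw [hp₁l, hinnerh]
    refine ⟨glue p₁ inner, glue_chain' hp₁c hinnerc hcond2, ?_, ⟨b, hb, ?_⟩, ?_⟩
    · rw [glue_head? _ hp₁ne]; exact hp₁h
    · rw [glue_getLast? hcond2 hinnerne]; exact hinnerl
    · intro u' hu'
      rcases List.mem_cons.1 hu' with rfl | hu'
      · refine ⟨w, ?_, hwo, hwlen⟩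
        have h1 : w <+: inner := glue_prefix w W₁
        have h2 : inner <:+ glue p₁ inner := glue_suffix hcond2
        exact h1.isInfix.trans h2.isInfix
      · obtain ⟨v, hv1, hv2, hv3⟩ := hblocks u' hu'
        refine ⟨v, ?_, hv2, hv3⟩
        have h1 : W₁ <:+ inner := glue_suffix hcond1
        have h2 : inner <:+ glue p₁ inner := glue_suffix hcond2
        exact hv1.trans ((h1.trans h2).isInfix)

/-- recurring θ-avoiding windows of length k+1 -/
def Win (L : LTS S AP) (σ : ℕ → S) (k : ℕ) (θ : StateFormula AP) : Prop :=
  ∀ a₀ : ℕ, ∃ a, a₀ ≤ a ∧ ∀ j ≤ k, ¬ SatState L θ (σ (a + j))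

theorem kill {σ : ℕ → S} {k : ℕ} (t : CTree AP)
    (hwin : ∀ θ ∈ nodeLabels t, Win L σ k θ) :
    ∀ a₀ : ℕ, ∃ a, a₀ ≤ a ∧ ∀ j ≤ k, ¬ SatC L t (shift σ (a + j)) k := by
  cases t with
  | node θ cs =>
    intro a₀
    have hθ : θ ∈ nodeLabels (CTree.node θ cs) := by
      rw [nodeLabels]; exact List.mem_cons_self
    obtain ⟨a, ha, hav⟩ := hwin θ hθ a₀
    refine ⟨a, ha, ?_⟩
    intro j hj hsat
    rcases satC_node.1 hsat with h | ⟨c, hc, h⟩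
    · exact hav j hj (by simpa [shift] using h)
    · have hwin' : ∀ θ' ∈ nodeLabels c, Win L σ k θ' := by
        intro θ' hθ'
        apply hwin θ'
        rw [nodeLabels]
        refine List.mem_cons_of_mem _ (List.mem_flatMap.2 ⟨⟨c, hc⟩, List.mem_attach _ _, hθ'⟩)
      obtain ⟨a', ha', hkills⟩ := kill c hwin' (a + j)
      obtain ⟨j', hj', hs⟩ := h (a' - (a + j))
      apply hkills j' hj'
      rw [shift_shift] at hs
      have heq : a' - (a + j) + j' + (a + j) = a' + j' := by omega
      rwa [heq] at hs
termination_by sizeOf t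
decreasing_by
  all_goals (subst_vars; simp only [CTree.node.sizeOf_spec, List.cons.sizeOf_spec]; try omega)
  have := List.sizeOf_lt_of_mem hc
  omega

end Backward
section BackwardMain
variable {S AP : Type} {L : LTS S AP}

theorem getElem_congr'' {α : Type} (W : List α) {i i' : ℕ} (h : i = i')
    {hi : i < W.length} {hi' : i' < W.length} : W[i]'hi = W[i']'hi' := by
  subst h; rfl

theorem getElem_append_middle {α : Type} (s v t W : List α) (hW : s ++ v ++ t = W) {j : ℕ}
    (hj : j < v.length) (hidx : s.length + j < W.length) : W[s.length + j]'hidx ∈ v := by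
  subst hW
  have hlt : s.length + j < (s ++ v).length := by simp; omega
  have e1 : (s ++ v ++ t)[s.length + j]'hidx = (s ++ v)[s.length + j]'hlt :=
    List.getElem_append_left hlt
  have e2 : (s ++ v)[s.length + j]'hlt = v[s.length + j - s.length]'(by simp at hlt; omega) :=
    List.getElem_append_right (by omega)
  have e3 : v[s.length + j - s.length]'(by simp at hlt; omega) = v[j]'hj :=
    getElem_congr'' v (by omega)
  rw [e1, e2, e3]
  exact List.getElem_mem _

theorem periodic_run {W : List S} (hW : IsLoop L W) :
    ∃ σ : ℕ → S, IsRun L σ ∧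
      ∀ n : ℕ, ∃ h : n % (W.length - 1) < W.length, σ n = W[n % (W.length - 1)]'h := by
  obtain ⟨hlen, hchain, hhl⟩ := hW
  set p := W.length - 1 with hp
  have hp1 : 1 ≤ p := by omega
  have hmod : ∀ n : ℕ, n % p < W.length := fun n =>
    lt_of_lt_of_le (Nat.mod_lt _ (by omega)) (by omega)
  refine ⟨fun n => W[n % p]'(hmod n), ?_, fun n => ⟨hmod n, rfl⟩⟩
  intro n
  show L.T (W[n % p]'(hmod n)) (W[(n+1) % p]'(hmod (n+1)))
  have key : (n + 1) % p = (n % p + 1) % p := (Nat.mod_add_mod n p 1).symm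
  have hnp : n % p < p := Nat.mod_lt _ (by omega)
  by_cases hm : n % p + 1 < p
  · have h2 : (n + 1) % p = n % p + 1 := by rw [key]; exact Nat.mod_eq_of_lt hm
    have e : W[(n+1) % p]'(hmod (n+1)) = W[n % p + 1]'(by omega) := getElem_congr'' W h2
    rw [e]
    have step := List.isChain_iff_getElem.1 hchain (n % p) (by omega)
    simpa using step
  · have hmp : n % p + 1 = p := by omega
    have h2 : (n + 1) % p = 0 := by rw [key, hmp, Nat.mod_self]
    have e : W[(n+1) % p]'(hmod (n+1)) = W[0]'(by omega) := getElem_congr'' W h2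
    have hW0 : W[0]'(by omega) = W[W.length - 1]'(by omega) :=
      loop_head_eq_getLast ⟨hlen, hchain, hhl⟩ (by omega) (by omega)
    rw [e, hW0]
    have step := List.isChain_iff_getElem.1 hchain (n % p) (by omega)
    have e2 : W[n % p + 1]'(by omega) = W[W.length - 1]'(by omega) := getElem_congr'' W (by omega)
    rw [e2] at step
    exact step

theorem backward_dir [Fintype S] (cs : List (CTree AP)) (k : ℕ)
    (C : Set S) (hSCC : IsSCC L C) (U : AvoidingSeq L (.node [] cs)) (ρ : ℕ → S)
    (_hρ : IsRun L ρ) (hCmem : ∀ n : ℕ, ρ n ∈ C) (hreal : RealizedBy U ρ) :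
    ∃ σ : ℕ → S, IsRun L σ ∧ ¬ ∃ i : ℕ, SatC L (.node [] cs) (shift σ i) k := by
  classical
  obtain ⟨s, hs⟩ := hSCC
  have hmut : ∀ a ∈ C, ∀ b ∈ C, Reachable L a b := by
    intro a haC b hbC
    rw [hs] at haC hbC
    exact haC.2.trans hbC.1
  have hloopC : ∀ u ∈ U.loops, occ u ⊆ C := by
    intro u hu x hx
    obtain ⟨i, hiu⟩ := List.mem_iff_get.1 hu
    obtain ⟨jf, hjmono, hj⟩ := hreal
    have hy : ρ (jf i) ∈ occ (U.loops.get i) := hj i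
    have hyC : ρ (jf i) ∈ C := hCmem _
    have hul : IsLoop L u := U.isLoop u hu
    have hyx : Reachable L (ρ (jf i)) x := loop_mutual_reach hul (hiu ▸ hy) hx
    have hxy : Reachable L x (ρ (jf i)) := loop_mutual_reach hul hx (hiu ▸ hy)
    rw [hs]; rw [hs] at hyC
    exact ⟨hyC.1.trans hyx, hxy.trans hyC.2⟩
  have hρ0 : ρ 0 ∈ C := hCmem 0
  obtain ⟨W₀, hW₀c, hW₀h, ⟨b, hbC, hW₀l⟩, hblocks⟩ :=
    build_W hmut (k + 2) U.loops (fun u hu => ⟨U.isLoop u hu, hloopC u hu⟩) (ρ 0) hρ0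
  obtain ⟨p₂, hp₂ne, hp₂c, hp₂h, hp₂l⟩ := reach_path (hmut b hbC (ρ 0) hρ0)
  have hW₀ne : W₀ ≠ [] := by intro h; rw [h] at hW₀h; simp at hW₀h
  have hcond : W₀.getLast? = p₂.head? := by rw [hW₀l, hp₂h]
  set W := glue W₀ p₂ with hWdef
  have hWc : W.Chain' L.T := glue_chain' hW₀c hp₂c hcond
  have hWh : W.head? = some (ρ 0) := by rw [hWdef, glue_head? _ hW₀ne]; exact hW₀h
  have hWl : W.getLast? = some (ρ 0) := by rw [hWdef, glue_getLast? hcond hp₂ne]; exact hp₂l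
  have hlabne : U.labels ≠ [] := by
    have hlin := U.linext
    revert hlin
    generalize U.labels = lab
    intro hlin
    cases hlin
    simp
  have hloopsne : U.loops ≠ [] := by
    have hleq := U.length_eq
    intro h; rw [h] at hleq; simp at hleq
    exact hlabne (List.length_eq_zero_iff.1 hleq.symm)
  have hWlen : 2 ≤ W.length := by
    obtain ⟨u₀, hu₀⟩ := List.exists_mem_of_ne_nil _ hloopsne
    obtain ⟨v, hv1, _, hv3⟩ := hblocks u₀ hu₀
    have h1 : v.length ≤ W₀.length := hv1.length_le
    have h2 : W₀.length ≤ W.length := by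
      rw [hWdef, glue_length]; omega
    omega
  have hWloop : IsLoop L W := ⟨hWlen, hWc, by rw [hWh, hWl]⟩
  obtain ⟨σ, hσrun, hσval⟩ := periodic_run hWloop
  refine ⟨σ, hσrun, ?_⟩
  have hwin : ∀ θ ∈ U.labels, Win L σ k θ := by
    intro θ hθ
    obtain ⟨⟨i, hilen⟩, hiθ⟩ := List.mem_iff_get.1 hθ
    have hiloop : i < U.loops.length := by rw [U.length_eq]; exact hilen
    set u := U.loops.get ⟨i, hiloop⟩ with hu
    have hum : u ∈ U.loops := List.get_mem _ _
    have hzip : (u, θ) ∈ U.loops.zip U.labels := by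
      have hlenz : i < (U.loops.zip U.labels).length := by rw [List.length_zip]; omega
      have hz : (U.loops.zip U.labels)[i]'hlenz = (U.loops[i]'hiloop, U.labels[i]'hilen) :=
        List.getElem_zip
      have hmemz := List.getElem_mem hlenz
      rw [hz] at hmemz
      have h1 : u = U.loops[i]'hiloop := by rw [hu]; simp [List.get_eq_getElem]
      have h2 : θ = U.labels[i]'hilen := by rw [← hiθ]; simp [List.get_eq_getElem]
      rw [h1, h2]
      exact hmemz
    have havoid : ∀ x ∈ occ u, ¬ SatState L θ x := fun x hx => U.avoid (u, θ) hzip x hx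
    obtain ⟨v, hvinf, hvocc, hvlen⟩ := hblocks u hum
    have hvinfW : v <:+: W := hvinf.trans (glue_prefix W₀ p₂).isInfix
    obtain ⟨s₁, t₁, hWeq⟩ := hvinfW
    intro a₀
    set pp := W.length - 1 with hpp
    have hpp1 : 1 ≤ pp := by omega
    have holen : s₁.length + v.length + t₁.length = W.length := by
      rw [← hWeq]; simp [List.length_append]; omega
    refine ⟨s₁.length + a₀ * pp, by nlinarith, ?_⟩
    intro j hj
    obtain ⟨hlt, hval⟩ := hσval (s₁.length + a₀ * pp + j)
    have hmodeq : (s₁.length + a₀ * pp + j) % pp = s₁.length + j := by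
      have h1 : s₁.length + a₀ * pp + j = (s₁.length + j) + a₀ * pp := by ring
      rw [h1, Nat.add_mul_mod_self_right, Nat.mod_eq_of_lt (by omega)]
    have hidx : s₁.length + j < W.length := by omega
    have e : W[(s₁.length + a₀ * pp + j) % pp]'hlt = W[s₁.length + j]'hidx :=
      getElem_congr'' W hmodeq
    have hmemv : W[s₁.length + j]'hidx ∈ v :=
      getElem_append_middle s₁ v t₁ W hWeq (by omega) hidx
    apply havoid
    rw [hval, e]
    exact hvocc hmemv
  rintro ⟨i₀, hsat⟩
  rcases satC_node.1 hsat with h | ⟨c, hc, h⟩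
  · exact satState_nil L _ h
  · have hwin' : ∀ θ ∈ nodeLabels c, Win L σ k θ := by
      intro θ hθ
      apply hwin
      apply linExt_labels_subset U.linext
      rw [nodeLabels]
      exact List.mem_cons_of_mem _ (List.mem_flatMap.2 ⟨⟨c, hc⟩, List.mem_attach _ _, hθ⟩)
    obtain ⟨a, ha, hkills⟩ := kill c hwin' i₀
    obtain ⟨j, hj, hs'⟩ := h (a - i₀)
    apply hkills j hj
    rw [shift_shift] at hs'
    have heq : a - i₀ + j + i₀ = a + j := by omega
    rwa [heq] at hs'

end BackwardMain
section Forward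
variable {S AP : Type}

/-- the finite run segment `ρ m, ρ (m+1), …, ρ (m+n-1)` -/
def runSeg (ρ : ℕ → S) (m n : ℕ) : List S := (List.range n).map (fun t => ρ (m + t))

theorem runSeg_length (ρ : ℕ → S) (m n : ℕ) : (runSeg ρ m n).length = n := by
  simp [runSeg]

theorem runSeg_getElem (ρ : ℕ → S) (m n i : ℕ) (h : i < (runSeg ρ m n).length) :
    (runSeg ρ m n)[i] = ρ (m + i) := by
  simp only [runSeg, List.getElem_map]
  rw [List.getElem_range]

theorem runSeg_chain' {L : LTS S AP} {ρ : ℕ → S} (hρ : IsRun L ρ) (m n : ℕ) :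
    (runSeg ρ m n).Chain' L.T := by
  simp only [List.Chain', List.isChain_iff_getElem]
  intro i hi
  simp only [List.get_eq_getElem, runSeg_getElem]
  have : m + (i + 1) = (m + i) + 1 := by omega
  rw [this]
  exact hρ _

theorem runSeg_mem {ρ : ℕ → S} {m n : ℕ} {x : S} (h : x ∈ runSeg ρ m n) :
    ∃ t < n, x = ρ (m + t) := by
  simp only [runSeg, List.mem_map, List.mem_range] at h
  obtain ⟨t, ht, rfl⟩ := h
  exact ⟨t, ht, rfl⟩

theorem runSeg_head? (ρ : ℕ → S) (m n : ℕ) (hn : 0 < n) :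
    (runSeg ρ m n).head? = some (ρ m) := by
  rw [List.head?_eq_getElem?, List.getElem?_eq_getElem (by rw [runSeg_length]; omega)]
  simp [runSeg_getElem]

theorem runSeg_getLast? (ρ : ℕ → S) (m n : ℕ) (hn : 0 < n) :
    (runSeg ρ m n).getLast? = some (ρ (m + (n - 1))) := by
  rw [List.getLast?_eq_getElem?, List.getElem?_eq_getElem
    (by rw [runSeg_length]; omega)]
  simp [runSeg_getElem, runSeg_length]

theorem runSeg_isLoop {L : LTS S AP} {ρ : ℕ → S} (hρ : IsRun L ρ) {m d : ℕ} (hd : 1 ≤ d)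
    (heq : ρ m = ρ (m + d)) : IsLoop L (runSeg ρ m (d + 1)) := by
  refine ⟨by rw [runSeg_length]; omega, runSeg_chain' hρ m (d+1), ?_⟩
  rw [runSeg_head? _ _ _ (by omega), runSeg_getLast? _ _ _ (by omega)]
  simp only [Nat.add_sub_cancel]
  rw [heq]

mutual
theorem extractT [Fintype S] {L : LTS S AP} {ρ : ℕ → S} {k : ℕ} (hρ : IsRun L ρ)
    (hk : Fintype.card S + 1 ≤ k) (t : CTree AP) (a : ℕ)
    (h : ∀ j ≤ k, ¬ SatC L t (shift ρ (a + j)) k) :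
    ∃ lst : List (StateFormula AP × List S × ℕ),
      LinExt t (lst.map (fun r => r.1)) ∧
      (∀ r ∈ lst, IsLoop L r.2.1 ∧ (∀ x ∈ r.2.1, ¬ SatState L r.1 x) ∧
        ρ r.2.2 ∈ occ r.2.1 ∧ a ≤ r.2.2) ∧
      lst.Pairwise (fun r r' => r.2.2 ≤ r'.2.2) := by
  cases t with
  | node θ cs =>
    -- the window [a, a+k] avoids θ
    have hsc : ∀ j ≤ k, ¬ SatState L θ (ρ (a + j)) := by
      intro j hj hsat
      exact (h j hj) (satC_node.2 (Or.inl (by simpa [shift] using hsat)))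
    -- pigeonhole
    obtain ⟨x, y, hxy, hfeq⟩ :=
      Fintype.exists_ne_map_eq_of_card_lt (fun j : Fin (k+1) => ρ (a + j))
        (by simp; omega)
    have hwlog : ∃ j₁ j₂ : ℕ, j₁ < j₂ ∧ j₂ ≤ k ∧ ρ (a + j₁) = ρ (a + j₂) := by
      rcases lt_or_gt_of_ne hxy with hlt | hlt
      · exact ⟨x, y, hlt, by omega, hfeq⟩
      · exact ⟨y, x, hlt, by omega, hfeq.symm⟩
    obtain ⟨j₁, j₂, hj12, hj2k, heq⟩ := hwlog
    set m₁ := a + j₁ with hm₁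
    set d := j₂ - j₁ with hd
    have heq' : ρ m₁ = ρ (m₁ + d) := by
      rw [hm₁, hd]
      have : a + j₁ + (j₂ - j₁) = a + j₂ := by omega
      rw [this]; exact heq
    set w := runSeg ρ m₁ (d + 1) with hw
    have hwloop : IsLoop L w := runSeg_isLoop hρ (by omega) heq'
    -- child windows
    have hnot := h j₁ (by omega)
    rw [satC_node] at hnot
    push_neg at hnot
    have h' : ∀ c ∈ cs, ∃ i, ∀ j ≤ k, ¬ SatC L c (shift ρ (m₁ + i + j)) k := by
      intro c hc
      obtain ⟨i, hi⟩ := hnot.2 c hc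
      refine ⟨i, fun j hj => ?_⟩
      have := hi j hj
      rw [shift_shift] at this
      have harith : m₁ + i + j = i + j + (a + j₁) := by omega
      rwa [harith]
    obtain ⟨lst', hlin', hgood', hpair'⟩ := extractF hρ hk cs m₁ h'
    -- TERM_T
    refine ⟨(θ, w, m₁) :: lst', ?_, ?_, ?_⟩
    · simp only [List.map_cons]
      exact LinExt.node hlin'
    · intro r hr
      rcases List.mem_cons.1 hr with rfl | hr
      · refine ⟨hwloop, ?_, ?_, by show a ≤ m₁; omega⟩
        · intro x hx
          obtain ⟨tt, htt, rfl⟩ := runSeg_mem hx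
          have : m₁ + tt = a + (j₁ + tt) := by omega
          rw [this]
          exact hsc (j₁ + tt) (by omega)
        · show ρ m₁ ∈ occ w
          have h0 : (runSeg ρ m₁ (d+1))[0]'(by rw [runSeg_length]; omega) = ρ m₁ := by
            simp [runSeg_getElem]
          rw [hw, ← h0]
          exact List.getElem_mem _
      · obtain ⟨h1, h2, h3, h4⟩ := hgood' r hr
        exact ⟨h1, h2, h3, by omega⟩
    · rw [List.pairwise_cons]
      exact ⟨fun r hr => (hgood' r hr).2.2.2, hpair'⟩
termination_by sizeOf t
decreasing_by
  all_goals (subst_vars; simp only [CTree.node.sizeOf_spec, List.cons.sizeOf_spec]; omega)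

theorem extractF [Fintype S] {L : LTS S AP} {ρ : ℕ → S} {k : ℕ} (hρ : IsRun L ρ)
    (hk : Fintype.card S + 1 ≤ k) (cs : List (CTree AP)) (b : ℕ)
    (h : ∀ c ∈ cs, ∃ i, ∀ j ≤ k, ¬ SatC L c (shift ρ (b + i + j)) k) :
    ∃ lst : List (StateFormula AP × List S × ℕ),
      LinExtF cs (lst.map (fun r => r.1)) ∧
      (∀ r ∈ lst, IsLoop L r.2.1 ∧ (∀ x ∈ r.2.1, ¬ SatState L r.1 x) ∧
        ρ r.2.2 ∈ occ r.2.1 ∧ b ≤ r.2.2) ∧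
      lst.Pairwise (fun r r' => r.2.2 ≤ r'.2.2) := by
  cases cs with
  | nil => exact ⟨[], by simpa using LinExtF.nil, by simp, List.Pairwise.nil⟩
  | cons c cs' =>
    obtain ⟨i, hi⟩ := h c (List.mem_cons_self)
    obtain ⟨lst₁, hlin₁, hgood₁, hpair₁⟩ := extractT hρ hk c (b + i) hi
    obtain ⟨lst₂, hlin₂, hgood₂, hpair₂⟩ :=
      extractF hρ hk cs' b (fun c' hc' => h c' (List.mem_cons_of_mem _ hc'))
    refine ⟨kmerge (fun r => r.2.2) lst₁ lst₂, ?_, ?_, ?_⟩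
    · exact LinExtF.cons hlin₁ hlin₂
        (interleave_map _ (kmerge_interleave (fun r => r.2.2) lst₁ lst₂))
    · intro r hr
      rcases kmerge_mem _ hr with hr | hr
      · obtain ⟨h1, h2, h3, h4⟩ := hgood₁ r hr
        exact ⟨h1, h2, h3, by omega⟩
      · exact hgood₂ r hr
    · exact kmerge_sorted _ _ _ hpair₁ hpair₂
termination_by sizeOf cs
decreasing_by
  all_goals (subst_vars; simp only [CTree.node.sizeOf_spec, List.cons.sizeOf_spec]; omega)
end

end Forward
section ForwardMain
variable {S AP : Type}

theorem tail_inf [Fintype S] (σ : ℕ → S) :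
    ∃ N : ℕ, ∀ n ≥ N, ∀ N' : ℕ, ∃ m ≥ N', σ m = σ n := by
  classical
  have hchoice : ∀ s : S, ∃ Ns : ℕ, (∀ N', ∃ m ≥ N', σ m = s) ∨ (∀ m ≥ Ns, σ m ≠ s) := by
    intro s
    by_cases h : ∀ N', ∃ m ≥ N', σ m = s
    · exact ⟨0, Or.inl h⟩
    · push_neg at h
      obtain ⟨N', hN'⟩ := h
      exact ⟨N', Or.inr fun m hm => hN' m hm⟩
  choose g hg using hchoice
  refine ⟨Finset.univ.sup g, ?_⟩
  intro n hn N'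
  rcases hg (σ n) with hinf | hbad
  · exact hinf N'
  · exact absurd rfl (hbad n (le_trans (Finset.le_sup (Finset.mem_univ _)) hn))

theorem le_foldr_max (l : List ℕ) : ∀ x ∈ l, x ≤ l.foldr max 0 := by
  induction l with
  | nil => simp
  | cons a l ih =>
    intro x hx
    rcases List.mem_cons.1 hx with rfl | hx
    · simp [List.foldr_cons]
    · exact le_trans (ih x hx) (by simp [List.foldr_cons])

theorem forward_dir [Fintype S] (L : LTS S AP) (cs : List (CTree AP)) (k : ℕ)
    (hk : Fintype.card S + 1 ≤ k) (σ : ℕ → S) (hσ : IsRun L σ)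
    (hneg : ¬ ∃ i : ℕ, SatC L (.node [] cs) (shift σ i) k) :
    ∃ C : Set S, IsSCC L C ∧
      ∃ U : AvoidingSeq L (CTree.node [] cs), ∃ ρ : ℕ → S,
        IsRun L ρ ∧ (∀ n : ℕ, ρ n ∈ C) ∧ RealizedBy U ρ := by
  classical
  push_neg at hneg
  obtain ⟨N, hN⟩ := tail_inf σ
  set ρ : ℕ → S := shift σ N with hρdef
  have hρ : IsRun L ρ := by
    intro n
    have h1 : ρ n = σ (n + N) := rfl
    have h2 : ρ (n + 1) = σ (n + 1 + N) := rfl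
    have h3 : n + 1 + N = (n + N) + 1 := by omega
    rw [h1, h2, h3]
    exact hσ (n + N)
  set C : Set S := {t : S | Reachable L (σ N) t ∧ Reachable L t (σ N)} with hCdef
  have hCmem : ∀ n : ℕ, ρ n ∈ C := by
    intro n
    constructor
    · exact run_reach hσ (by omega : N ≤ n + N)
    · obtain ⟨m, hm, hmeq⟩ := hN N (le_refl N) (n + N)
      have := run_reach hσ hm
      rwa [hmeq] at this
  have hroot : ∀ j ≤ k, ¬ SatC L (CTree.node [] cs) (shift ρ (0 + j)) k := by
    intro j hj
    rw [hρdef, shift_shift]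
    have : 0 + j + N = j + N := by omega
    rw [this]
    exact hneg (j + N)
  obtain ⟨lst, hlin, hgood, hpair⟩ := extractT hρ hk (CTree.node [] cs) 0 hroot
  refine ⟨C, ⟨σ N, rfl⟩, ?_⟩
  refine ⟨⟨lst.map (fun r => r.1), lst.map (fun r => r.2.1), hlin, by simp, ?_, ?_⟩, ρ, hρ, hCmem, ?_⟩
  · intro u hu
    obtain ⟨r, hr, rfl⟩ := List.mem_map.1 hu
    exact (hgood r hr).1
  · intro p hp
    rw [List.zip_map'] at hp
    obtain ⟨r, hr, rfl⟩ := List.mem_map.1 hp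
    exact (hgood r hr).2.1
  · -- realized
    set M := (lst.map (fun r => r.2.2)).foldr max 0 with hM
    refine ⟨fun n => if h : n < lst.length then (lst.get ⟨n, h⟩).2.2 else M + n, ?_, ?_⟩
    · intro n m hnm
      by_cases h1 : n < lst.length
      · by_cases h2 : m < lst.length
        · simp only [dif_pos h1, dif_pos h2]
          rcases eq_or_lt_of_le hnm with rfl | hlt
          · exact le_refl _
          · exact List.pairwise_iff_get.1 hpair ⟨n, h1⟩ ⟨m, h2⟩ hlt
        · simp only [dif_pos h1, dif_neg h2]
          have : (lst.get ⟨n, h1⟩).2.2 ≤ M :=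
            le_foldr_max _ _ (List.mem_map.2 ⟨lst.get ⟨n, h1⟩, List.get_mem _ _, rfl⟩)
          omega
      · have h2 : ¬ m < lst.length := by omega
        simp only [dif_neg h1, dif_neg h2]
        omega
    · intro i
      have hilen : (i : ℕ) < lst.length := by
        have := i.2
        simpa using this
      simp only [dif_pos hilen]
      have hget : (lst.map (fun r => r.2.1)).get i = (lst.get ⟨i, hilen⟩).2.1 := by
        simp [List.get_eq_getElem, List.getElem_map]
      rw [hget]
      exact (hgood _ (List.get_mem _ _)).2.2.1

end ForwardMain

/-- **SCC characterization for initialized formulas.** For `ψ` a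
conjunction-free canonical formula of `L⁺(F_p^∞)` (root labeled `false`) and
`k ≥ |S| + 1`: there is a run `ρ` of `L` with `(ρ,k) ⊭ F ψ` iff there are an SCC `C`
of `L` and a `ψ`-avoiding sequence realized by a run all of whose states lie in `C`. -/
theorem scc_characterization [Fintype S] (L : LTS S AP) (cs : List (CTree AP)) (k : ℕ)
    (hk : Fintype.card S + 1 ≤ k) :
    (∃ ρ : ℕ → S, IsRun L ρ ∧ ¬ ∃ i : ℕ, SatC L (.node [] cs) (shift ρ i) k) ↔
    (∃ C : Set S, IsSCC L C ∧
      ∃ U : AvoidingSeq L (CTree.node [] cs), ∃ ρ : ℕ → S,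
        IsRun L ρ ∧ (∀ n : ℕ, ρ n ∈ C) ∧ RealizedBy U ρ) := by
  constructor
  · rintro ⟨σ, hσ, hneg⟩
    exact forward_dir L cs k hk σ hσ hneg
  · rintro ⟨C, hSCC, U, ρ, hρ, hCmem, hreal⟩
    exact backward_dir cs k C hSCC U ρ hρ hCmem hreal
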